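/- arXiv:1411.5123 — 6 statements merged into one kernel-verified Lean document; each statement's English description precedes it below -/
import Mathlib

section
/- Let G be a finite simple connected graph with n vertices, m edges, and minimum degree δ, and let S be a side of a minimum cut of G with vol(S) ≤ vol(V∖S). Then either |S| = 1, or vol(S) ≥ δ² and Φ(S) ≤ 1/δ. -/
open scoped Classical
open Finset

noncomputable section

variable {V : Type*} [Fintype V]

/-- The set of edges of `G` with exactly one endpoint in `S`. -/
def bdry (G : SimpleGraph V) (S : Finset V) : Finset (Sym2 V) :=
  G.edgeFinset.filter fun e => ∃ u v, u ∈ S ∧ v ∉ S ∧ e = s(u, v)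

/-- The volume of `S`: the sum of the degrees of the vertices of `S`. -/
def vol (G : SimpleGraph V) (S : Finset V) : ℕ := ∑ v ∈ S, G.degree v

/-- The edge connectivity of `G`: the minimum of `|∂S|` over nonempty proper `S ⊆ V`. -/
def econn (G : SimpleGraph V) : ℕ :=
  sInf {k | ∃ S : Finset V, S.Nonempty ∧ S ≠ Finset.univ ∧ (bdry G S).card = k}

/-- The conductance `Φ(S) = |∂S| / min(vol S, 2m − vol S)`. -/
def conduct (G : SimpleGraph V) (S : Finset V) : ℝ :=
  ((bdry G S).card : ℝ) /
    ((min (vol G S) (2 * G.edgeFinset.card - vol G S) : ℕ) : ℝ)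

lemma bdry_card_eq (G : SimpleGraph V) (S : Finset V) :
    (bdry G S).card = ∑ v ∈ S, ((G.neighborFinset v) \ S).card := by
  classical
  have h1 : ∑ v ∈ S, ((G.neighborFinset v) \ S).card
      = ((S ×ˢ Sᶜ).filter fun p : V × V => G.Adj p.1 p.2).card := by
    rw [Finset.card_filter, Finset.sum_product]
    refine Finset.sum_congr rfl fun u hu => ?_
    rw [← Finset.card_filter]
    congr 1
    ext v
    simp [Finset.mem_filter, Finset.mem_sdiff, and_comm]
  rw [h1]
  refine (Finset.card_bij (fun p _ => s(p.1, p.2)) ?_ ?_ ?_).symm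
  · rintro ⟨u, v⟩ hp
    simp only [Finset.mem_filter, Finset.mem_product, Finset.mem_compl] at hp
    refine Finset.mem_filter.2 ⟨?_, u, v, hp.1.1, hp.1.2, rfl⟩
    exact SimpleGraph.mem_edgeFinset.2 hp.2
  · rintro ⟨a, b⟩ ha ⟨c, d⟩ hc h
    simp only [Finset.mem_filter, Finset.mem_product, Finset.mem_compl] at ha hc
    rw [Sym2.eq_iff] at h
    rcases h with ⟨rfl, rfl⟩ | ⟨rfl, rfl⟩
    · rfl
    · exact absurd ha.1.1 hc.1.2
  · intro e he
    obtain ⟨hE, u, v, hu, hv, rfl⟩ := Finset.mem_filter.1 he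
    exact ⟨(u, v), Finset.mem_filter.2 ⟨Finset.mem_product.2 ⟨hu, Finset.mem_compl.2 hv⟩,
      SimpleGraph.mem_edgeFinset.1 hE⟩, rfl⟩

lemma bdry_singleton (G : SimpleGraph V) (v : V) :
    bdry G {v} = G.incidenceFinset v := by
  classical
  ext e
  simp only [bdry, Finset.mem_filter, SimpleGraph.mem_edgeFinset,
    SimpleGraph.mem_incidenceFinset, SimpleGraph.mk'_mem_incidenceSet_iff]
  constructor
  · rintro ⟨he, u, w, hu, hw, rfl⟩
    simp only [Finset.mem_singleton] at hu hw
    subst hu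
    exact ⟨G.mem_edgeSet.1 he, Sym2.mem_mk_left _ _⟩
  · rintro ⟨he, hv⟩
    refine ⟨he, ?_⟩
    induction e with
    | h a b =>
      rw [Sym2.mem_iff] at hv
      have hadj : G.Adj a b := G.mem_edgeSet.1 he
      rcases hv with rfl | rfl
      · exact ⟨v, b, Finset.mem_singleton_self v, by simp [hadj.ne'], rfl⟩
      · exact ⟨v, a, Finset.mem_singleton_self v, by simp [hadj.ne], Sym2.eq_swap⟩

lemma econn_le_minDegree (G : SimpleGraph V) (hcard : 1 < Fintype.card V) :
    econn G ≤ G.minDegree := by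
  classical
  have : Nonempty V := Fintype.card_pos_iff.1 (by omega)
  obtain ⟨v, hv⟩ := G.exists_minimal_degree_vertex
  refine Nat.sInf_le ⟨{v}, Finset.singleton_nonempty v, ?_, ?_⟩
  · intro h
    obtain ⟨w, hw⟩ := Fintype.exists_ne_of_one_lt_card hcard v
    have : w ∈ ({v} : Finset V) := h ▸ Finset.mem_univ w
    exact hw (Finset.mem_singleton.1 this)
  · rw [bdry_singleton, SimpleGraph.card_incidenceFinset_eq_degree, hv]

theorem stmt4 {V : Type*} [Fintype V] (G : SimpleGraph V)
    (hconn : G.Connected) (δ : ℕ) (hδ : δ = G.minDegree)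
    (S : Finset V) (hS : S.Nonempty) (hSu : S ≠ Finset.univ)
    (hmin : (bdry G S).card = econn G)
    (hvol : vol G S ≤ vol G Sᶜ) :
    S.card = 1 ∨ (δ ^ 2 ≤ vol G S ∧ conduct G S ≤ 1 / (δ : ℝ)) := by
  classical
  obtain ⟨v0, hv0⟩ := hS
  obtain ⟨w0, hw0⟩ : ∃ w, w ∉ S := by
    by_contra h
    push_neg at h
    exact hSu (Finset.eq_univ_iff_forall.2 h)
  have hcard : 1 < Fintype.card V :=
    Fintype.one_lt_card_iff.2 ⟨v0, w0, fun h => hw0 (h ▸ hv0)⟩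
  -- δ ≥ 1
  have : Nonempty V := ⟨v0⟩
  have hδpos : 0 < δ := by
    rw [hδ]
    obtain ⟨u, hu⟩ := G.exists_minimal_degree_vertex
    rw [hu, G.degree_pos_iff_exists_adj]
    obtain ⟨w, hw⟩ := Fintype.exists_ne_of_one_lt_card hcard u
    rcases hconn u w with ⟨p⟩
    cases p with
    | nil => exact absurd rfl hw.symm
    | cons h q => exact ⟨_, h⟩
  -- |∂S| ≤ δ
  have hbd : (bdry G S).card ≤ δ := by
    rw [hmin, hδ]; exact econn_le_minDegree G hcard
  -- lower bound on vol
  have hlow : S.card * δ ≤ vol G S := by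
    calc S.card * δ = ∑ _v ∈ S, δ := by rw [Finset.sum_const, smul_eq_mul, mul_comm]
    _ ≤ ∑ v ∈ S, G.degree v :=
      Finset.sum_le_sum fun v _ => hδ ▸ G.minDegree_le_degree v
  -- upper bound on vol
  have hup : vol G S ≤ S.card * (S.card - 1) + (bdry G S).card := by
    rw [bdry_card_eq]
    have : vol G S = ∑ v ∈ S, (((G.neighborFinset v) ∩ S).card
        + ((G.neighborFinset v) \ S).card) := by
      refine Finset.sum_congr rfl fun v _ => ?_
      rw [Finset.card_inter_add_card_sdiff, SimpleGraph.card_neighborFinset_eq_degree]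
    rw [this, Finset.sum_add_distrib]
    refine Nat.add_le_add_right ?_ _
    calc ∑ v ∈ S, ((G.neighborFinset v) ∩ S).card
        ≤ ∑ _v ∈ S, (S.card - 1) := by
          refine Finset.sum_le_sum fun v hv => ?_
          have hsub : (G.neighborFinset v) ∩ S ⊆ S.erase v := by
            intro x hx
            rw [Finset.mem_inter] at hx
            exact Finset.mem_erase.2
              ⟨fun h => G.notMem_neighborFinset_self v (h ▸ hx.1), hx.2⟩
          calc ((G.neighborFinset v) ∩ S).card ≤ (S.erase v).card :=
              Finset.card_le_card hsub
          _ = S.card - 1 := Finset.card_erase_of_mem hv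
      _ = S.card * (S.card - 1) := by rw [Finset.sum_const, smul_eq_mul]
  by_cases h1 : S.card = 1
  · exact Or.inl h1
  right
  have hS2 : 2 ≤ S.card := by
    have := Finset.card_pos.2 ⟨v0, hv0⟩
    omega
  obtain ⟨k, hk⟩ : ∃ k, S.card = k + 2 := ⟨S.card - 2, by omega⟩
  -- δ ≤ |S|
  have hδS : δ ≤ S.card := by
    have hchain : S.card * δ ≤ S.card * (S.card - 1) + δ :=
      le_trans hlow (le_trans hup (Nat.add_le_add_left hbd _))
    rw [hk] at hchain ⊢
    have hsimp : (k + 2) * (k + 2 - 1) = (k + 2) * (k + 1) := rfl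
    rw [hsimp] at hchain
    nlinarith
  have hsq : δ ^ 2 ≤ vol G S := by
    calc δ ^ 2 = δ * δ := sq δ
    _ ≤ S.card * δ := Nat.mul_le_mul_right δ hδS
    _ ≤ vol G S := hlow
  refine ⟨hsq, ?_⟩
  -- handshake: vol S + vol Sᶜ = 2m
  have hsum : vol G S + vol G Sᶜ = 2 * G.edgeFinset.card := by
    rw [← SimpleGraph.sum_degrees_eq_twice_card_edges]
    exact Finset.sum_add_sum_compl S _
  have hmineq : min (vol G S) (2 * G.edgeFinset.card - vol G S) = vol G S :=
    min_eq_left (by omega)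
  have hvolpos : 0 < vol G S := lt_of_lt_of_le (by positivity) hsq
  rw [conduct, hmineq, div_le_div_iff₀ (by exact_mod_cast hvolpos) (by exact_mod_cast hδpos)]
  have hnat : (bdry G S).card * δ ≤ vol G S := by
    calc (bdry G S).card * δ ≤ δ * δ := Nat.mul_le_mul_right δ hbd
    _ = δ ^ 2 := (sq δ).symm
    _ ≤ vol G S := hsq
  calc ((bdry G S).card : ℝ) * δ ≤ (vol G S : ℝ) := by exact_mod_cast hnat
  _ = 1 * (vol G S : ℝ) := (one_mul _).symm

end
end

section
/- Let G be a finite simple graph and δ ≥ 31 a natural number. Let C ⊆ V and A ⊆ C be such that every vertex v ∈ A has at least 2δ/5 neighbors in C (i.e., 5·|N(v) ∩ C| ≥ 2δ), and suppose that the number of edges of G with one endpoint in A and the other endpoint in C∖A is at most δ. Then |A| ≤ 2 or |A| > δ/3. -/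
open scoped Classical
open Finset

noncomputable section

variable {V : Type*} [Fintype V]

/-- The set of edges of `G` with one endpoint in `A` and the other endpoint in `B`. -/
def edgesBetween (G : SimpleGraph V) (A B : Finset V) : Finset (Sym2 V) :=
  G.edgeFinset.filter fun e => ∃ u v, u ∈ A ∧ v ∈ B ∧ e = s(u, v)

theorem stmt6 {V : Type*} [Fintype V] (G : SimpleGraph V) (δ : ℕ) (hδ : 31 ≤ δ)
    (C A : Finset V) (hAC : A ⊆ C)
    (hdeg : ∀ v ∈ A, 2 * δ ≤ 5 * (G.neighborFinset v ∩ C).card)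
    (hcut : (edgesBetween G A (C \ A)).card ≤ δ) :
    A.card ≤ 2 ∨ δ < 3 * A.card := by
  by_contra h
  push_neg at h
  obtain ⟨h3, h3a⟩ := h
  set a := A.card with ha
  -- pointwise bound
  have key : ∀ v ∈ A, 2 * δ + 5 ≤ 5 * (G.neighborFinset v ∩ (C \ A)).card + 5 * a := by
    intro v hv
    have hsub : G.neighborFinset v ∩ C ⊆ (G.neighborFinset v ∩ A) ∪ (G.neighborFinset v ∩ (C \ A)) := by
      intro x hx
      simp only [Finset.mem_inter, Finset.mem_union, Finset.mem_sdiff] at hx ⊢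
      by_cases hxA : x ∈ A
      · exact Or.inl ⟨hx.1, hxA⟩
      · exact Or.inr ⟨hx.1, hx.2, hxA⟩
    have h1 : (G.neighborFinset v ∩ A).card ≤ a - 1 := by
      have : G.neighborFinset v ∩ A ⊆ A.erase v := by
        intro x hx
        simp only [Finset.mem_inter, SimpleGraph.mem_neighborFinset] at hx
        exact Finset.mem_erase.mpr ⟨fun hxv => G.ne_of_adj hx.1 hxv.symm, hx.2⟩
      calc (G.neighborFinset v ∩ A).card ≤ (A.erase v).card := Finset.card_le_card this
        _ = a - 1 := by rw [Finset.card_erase_of_mem hv]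
    have h2 : (G.neighborFinset v ∩ C).card ≤ (G.neighborFinset v ∩ A).card + (G.neighborFinset v ∩ (C \ A)).card :=
      (Finset.card_le_card hsub).trans (Finset.card_union_le _ _)
    have := hdeg v hv
    omega
  -- the sum of neighbors in C \ A is at most the number of crossing edges
  have hsum : ∑ v ∈ A, (G.neighborFinset v ∩ (C \ A)).card ≤ (edgesBetween G A (C \ A)).card := by
    have hdisj : (A : Set V).PairwiseDisjoint
        (fun v => (G.neighborFinset v ∩ (C \ A)).image (fun w => s(v, w))) := by
      intro u hu v hv huv
      simp only [Finset.disjoint_left]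
      intro e heu hev
      simp only [Finset.mem_image, Finset.mem_inter, Finset.mem_sdiff] at heu hev
      obtain ⟨x, ⟨_, _, hxA⟩, hex⟩ := heu
      obtain ⟨y, ⟨_, _, hyA⟩, hey⟩ := hev
      rw [← hex, Sym2.eq_iff] at hey
      rcases hey with ⟨h1, h2⟩ | ⟨h1, h2⟩
      · exact huv h1.symm
      · exact hyA (by rw [h2]; exact hu)
    have hcard : ∀ v ∈ A, ((G.neighborFinset v ∩ (C \ A)).image (fun w => s(v, w))).card
        = (G.neighborFinset v ∩ (C \ A)).card := by
      intro v hv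
      apply Finset.card_image_of_injOn
      intro x _ y _ hxy
      exact (Sym2.congr_right).mp hxy
    have hbu : (A.biUnion (fun v => (G.neighborFinset v ∩ (C \ A)).image (fun w => s(v, w)))).card
        = ∑ v ∈ A, (G.neighborFinset v ∩ (C \ A)).card := by
      rw [Finset.card_biUnion (fun u hu v hv huv => hdisj hu hv huv)]
      exact Finset.sum_congr rfl hcard
    have hsubE : A.biUnion (fun v => (G.neighborFinset v ∩ (C \ A)).image (fun w => s(v, w)))
        ⊆ edgesBetween G A (C \ A) := by
      intro e he
      simp only [Finset.mem_biUnion, Finset.mem_image, Finset.mem_inter,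
        SimpleGraph.mem_neighborFinset] at he
      obtain ⟨v, hv, x, ⟨hadj, hxC⟩, hex⟩ := he
      simp only [edgesBetween, Finset.mem_filter, SimpleGraph.mem_edgeFinset]
      subst hex
      exact ⟨by simpa using hadj, v, x, hv, hxC, rfl⟩
    rw [← hbu]
    exact Finset.card_le_card hsubE
  -- sum the pointwise bound
  have hsum2 : a * (2 * δ + 5) ≤ 5 * (∑ v ∈ A, (G.neighborFinset v ∩ (C \ A)).card) + a * (5 * a) := by
    calc a * (2 * δ + 5) = ∑ _v ∈ A, (2 * δ + 5) := by rw [Finset.sum_const, smul_eq_mul]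
      _ ≤ ∑ v ∈ A, (5 * (G.neighborFinset v ∩ (C \ A)).card + 5 * a) :=
          Finset.sum_le_sum key
      _ = 5 * (∑ v ∈ A, (G.neighborFinset v ∩ (C \ A)).card) + a * (5 * a) := by
          rw [Finset.sum_add_distrib, Finset.mul_sum, Finset.sum_const, smul_eq_mul]
  have hS : (∑ v ∈ A, (G.neighborFinset v ∩ (C \ A)).card) ≤ δ := hsum.trans hcut
  have hfin : a * (2 * δ + 5) ≤ 5 * δ + a * (5 * a) := by
    have : 5 * (∑ v ∈ A, (G.neighborFinset v ∩ (C \ A)).card) ≤ 5 * δ :=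
      Nat.mul_le_mul_left 5 hS
    omega
  -- final arithmetic contradiction
  have ha3 : 3 ≤ a := h3
  rcases le_or_gt a 10 with hc | hc
  · nlinarith
  · nlinarith
end
end

section
/- Let G be a finite simple graph with no isolated vertices and let 0 < α ≤ 1/3. Consider any run of pushes starting from the state (p₀, r₀) with p₀ = 0 and r₀ = p° an arbitrary function V → ℝ, and let p be the settled mass after the run. Then for every ordered pair (u, v) of adjacent vertices, the net flow over (u, v) during the run equals F(u,v) = ((1−α)/(2α)) · (p(u)/d(u) − p(v)/d(v)). -/
open scoped Classical
open Finset

noncomputable section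

variable {V : Type*} [Fintype V]

/-- The push operation at vertex `u` on a state `(p, r)` of settled and residual mass:
a fraction `α` of the residual mass at `u` settles at `u`, half of the rest is spread
evenly to the neighbors of `u`, and half stays at `u`. -/
def push (G : SimpleGraph V) (α : ℝ) (u : V) (s : (V → ℝ) × (V → ℝ)) :
    (V → ℝ) × (V → ℝ) :=
  (fun w => if w = u then s.1 u + α * s.2 u else s.1 w,
   fun w =>
     if w = u then (1 - α) * s.2 u / 2
     else if G.Adj u w then s.2 w + (1 - α) * s.2 u / (2 * (G.degree u : ℝ))
     else s.2 w)

/-- The state obtained from `init` by successively pushing at the vertices of the list `us`. -/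
def runState (G : SimpleGraph V) (α : ℝ) (init : (V → ℝ) × (V → ℝ)) (us : List V) :
    (V → ℝ) × (V → ℝ) :=
  us.foldl (fun s u => push G α u s) init

/-- The net flow over the ordered pair `(u, v)` during the run of pushes at the vertices of
`us` started at state `s`: the sum over pushes at `u` of the mass sent along `(u,v)` minus
the sum over pushes at `v` of the mass sent along `(v,u)`. -/
def netFlow (G : SimpleGraph V) (α : ℝ) (u v : V) :
    (V → ℝ) × (V → ℝ) → List V → ℝ
  | _, [] => 0
  | s, w :: ws =>
      ((if w = u then (1 - α) * s.2 u / (2 * (G.degree u : ℝ)) else 0) -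
        (if w = v then (1 - α) * s.2 v / (2 * (G.degree v : ℝ)) else 0)) +
      netFlow G α u v (push G α w s) ws

lemma netFlow_eq (G : SimpleGraph V) (α : ℝ) (hα0 : α ≠ 0) (u v : V)
    (us : List V) : ∀ s : (V → ℝ) × (V → ℝ),
    netFlow G α u v s us =
      (1 - α) / (2 * α) *
        (((runState G α s us).1 u - s.1 u) / (G.degree u : ℝ) -
         ((runState G α s us).1 v - s.1 v) / (G.degree v : ℝ)) := by
  induction us with
  | nil => intro s; simp [netFlow, runState]
  | cons w ws ih =>
    intro s
    have hrun : runState G α s (w :: ws) = runState G α (push G α w s) ws := rfl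
    have key : ∀ x : V,
        (if w = x then (1 - α) * s.2 x / (2 * (G.degree x : ℝ)) else 0) =
        (1 - α) / (2 * α) * (((push G α w s).1 x - s.1 x) / (G.degree x : ℝ)) := by
      intro x
      by_cases hx : x = w
      · subst hx
        simp only [push, if_pos rfl, if_true, add_sub_cancel_left]
        rw [div_mul_div_comm,
          show (1 - α) * (α * s.2 x) = α * ((1 - α) * s.2 x) by ring,
          show 2 * α * (G.degree x : ℝ) = α * (2 * (G.degree x : ℝ)) by ring,
          mul_div_mul_left _ _ hα0]
      · rw [if_neg (fun h => hx h.symm)]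
        simp only [push, if_neg hx]
        simp
    rw [show netFlow G α u v s (w :: ws) =
        ((if w = u then (1 - α) * s.2 u / (2 * (G.degree u : ℝ)) else 0) -
          (if w = v then (1 - α) * s.2 v / (2 * (G.degree v : ℝ)) else 0)) +
        netFlow G α u v (push G α w s) ws from rfl,
      ih (push G α w s), key u, key v, hrun]
    ring

theorem stmt8 {V : Type*} [Fintype V] (G : SimpleGraph V)
    (hd : ∀ v : V, 0 < G.degree v)
    (α : ℝ) (hα0 : 0 < α) (hα : α ≤ 1 / 3)
    (p0 : V → ℝ) (us : List V) (u v : V) (huv : G.Adj u v) :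
    netFlow G α u v ((fun _ => 0), p0) us =
      (1 - α) / (2 * α) *
        ((runState G α ((fun _ => 0), p0) us).1 u / (G.degree u : ℝ) -
         (runState G α ((fun _ => 0), p0) us).1 v / (G.degree v : ℝ)) := by
  rw [netFlow_eq G α (ne_of_gt hα0) u v us]
  simp

end
end

section
/- Let G be a finite simple graph with no isolated vertices, let 0 < α ≤ 1/3, and let σ ≥ 0. Consider any run of pushes starting from a state (p₀, r₀) with r₀ ≥ 0 and r₀(v)/d(v) ≤ σ for every vertex v. Then for every ordered pair (u, v) of adjacent vertices, the net flow over (u, v) during the run satisfies |F(u,v)| ≤ σ/(2α). -/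
open scoped Classical
open Finset

noncomputable section

variable {V : Type*} [Fintype V]

/-- Total residual mass pushed from `w` during the run. -/
def pushSum (G : SimpleGraph V) (α : ℝ) (w : V) :
    (V → ℝ) × (V → ℝ) → List V → ℝ
  | _, [] => 0
  | s, x :: xs => (if x = w then s.2 w else 0) + pushSum G α w (push G α x s) xs

lemma runState_nil (G : SimpleGraph V) (α : ℝ) (s : (V → ℝ) × (V → ℝ)) :
    runState G α s [] = s := rfl

lemma runState_cons (G : SimpleGraph V) (α : ℝ) (s : (V → ℝ) × (V → ℝ)) (x : V) (xs : List V) :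
    runState G α s (x :: xs) = runState G α (push G α x s) xs := rfl

lemma netFlow_eq_pushSum (G : SimpleGraph V) (α : ℝ) (u v : V)
    (s : (V → ℝ) × (V → ℝ)) (us : List V) :
    netFlow G α u v s us =
      (1 - α) / (2 * (G.degree u : ℝ)) * pushSum G α u s us -
      (1 - α) / (2 * (G.degree v : ℝ)) * pushSum G α v s us := by
  induction us generalizing s with
  | nil => simp [netFlow, pushSum]
  | cons x xs ih =>
      simp only [netFlow, pushSum, ih]
      split_ifs <;> ring

lemma push_r_nonneg (G : SimpleGraph V) (α : ℝ) (hα0 : 0 ≤ α) (hα1 : α ≤ 1)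
    (x : V) (s : (V → ℝ) × (V → ℝ)) (hs : ∀ w, 0 ≤ s.2 w) (w : V) :
    0 ≤ (push G α x s).2 w := by
  simp only [push]
  have h1 : (0:ℝ) ≤ 1 - α := by linarith
  have hd : (0:ℝ) ≤ 2 * (G.degree x : ℝ) := by positivity
  split_ifs with h h2
  · exact div_nonneg (mul_nonneg h1 (hs x)) (by norm_num)
  · have h3 : 0 ≤ (1 - α) * s.2 x / (2 * (G.degree x : ℝ)) :=
      div_nonneg (mul_nonneg h1 (hs x)) hd
    have := hs w; linarith
  · exact hs w

lemma runState_r_nonneg (G : SimpleGraph V) (α : ℝ) (hα0 : 0 ≤ α) (hα1 : α ≤ 1)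
    (s : (V → ℝ) × (V → ℝ)) (hs : ∀ w, 0 ≤ s.2 w) (us : List V) (w : V) :
    0 ≤ (runState G α s us).2 w := by
  induction us generalizing s with
  | nil => exact hs w
  | cons x xs ih =>
      rw [runState_cons]
      exact ih _ (push_r_nonneg G α hα0 hα1 x s hs)

lemma pushSum_nonneg (G : SimpleGraph V) (α : ℝ) (hα0 : 0 ≤ α) (hα1 : α ≤ 1) (w : V)
    (s : (V → ℝ) × (V → ℝ)) (hs : ∀ w, 0 ≤ s.2 w) (us : List V) :
    0 ≤ pushSum G α w s us := by
  induction us generalizing s with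
  | nil => simp [pushSum]
  | cons x xs ih =>
      simp only [pushSum]
      have h1 : 0 ≤ pushSum G α w (push G α x s) xs :=
        ih _ (push_r_nonneg G α hα0 hα1 x s hs)
      have h2 : 0 ≤ (if x = w then s.2 w else 0) := by
        split_ifs
        · exact hs w
        · exact le_refl 0
      linarith

/-- Mass conservation for the residual at `w` along a run. -/
lemma conservation (G : SimpleGraph V) (α : ℝ)
    (s : (V → ℝ) × (V → ℝ)) (us : List V) (w : V) :
    (runState G α s us).2 w =
      s.2 w - (1 + α) / 2 * pushSum G α w s us +
        ∑ x ∈ G.neighborFinset w, (1 - α) / (2 * (G.degree x : ℝ)) * pushSum G α x s us := by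
  induction us generalizing s with
  | nil => simp [runState_nil, pushSum]
  | cons y xs ih =>
      rw [runState_cons, ih]
      simp only [pushSum]
      rw [show ∑ x ∈ G.neighborFinset w, (1 - α) / (2 * (G.degree x : ℝ)) *
            ((if y = x then s.2 x else 0) + pushSum G α x (push G α y s) xs)
          = (∑ x ∈ G.neighborFinset w, if y = x then (1 - α) / (2 * (G.degree x : ℝ)) * s.2 x else 0)
            + ∑ x ∈ G.neighborFinset w, (1 - α) / (2 * (G.degree x : ℝ)) *
                pushSum G α x (push G α y s) xs by
        rw [← Finset.sum_add_distrib]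
        refine Finset.sum_congr rfl fun x _ => ?_
        split_ifs <;> ring]
      rw [Finset.sum_ite_eq]
      have key : (push G α y s).2 w =
          s.2 w - (1 + α) / 2 * (if y = w then s.2 w else 0) +
            (if y ∈ G.neighborFinset w then (1 - α) / (2 * (G.degree y : ℝ)) * s.2 y else 0) := by
        simp only [push, SimpleGraph.mem_neighborFinset]
        by_cases hyw : w = y
        · subst hyw
          simp [G.irrefl]
          ring
        · have hyw' : ¬ y = w := fun h => hyw h.symm
          simp only [if_neg hyw, if_neg hyw']
          by_cases hadj : G.Adj y w
          · rw [if_pos hadj, if_pos (G.adj_symm hadj)]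
            ring
          · rw [if_neg hadj, if_neg (fun h => hadj (G.adj_symm h))]
            ring
      rw [key]
      ring

theorem stmt9 {V : Type*} [Fintype V] (G : SimpleGraph V)
    (hd : ∀ v : V, 0 < G.degree v)
    (α : ℝ) (hα0 : 0 < α) (hα : α ≤ 1 / 3)
    (σ : ℝ) (hσ : 0 ≤ σ)
    (init : (V → ℝ) × (V → ℝ))
    (hr0 : ∀ v : V, 0 ≤ init.2 v)
    (hrσ : ∀ v : V, init.2 v / (G.degree v : ℝ) ≤ σ)
    (us : List V) (u v : V) (huv : G.Adj u v) :
    |netFlow G α u v init us| ≤ σ / (2 * α) := by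
  have hα1 : α ≤ 1 := by linarith
  have hα0' : (0:ℝ) ≤ α := le_of_lt hα0
  set t : V → ℝ := fun x => (1 - α) / (2 * (G.degree x : ℝ)) * pushSum G α x init us with ht
  have ht_nonneg : ∀ x, 0 ≤ t x := by
    intro x
    have h1 : (0:ℝ) ≤ 1 - α := by linarith
    have h2 : (0:ℝ) < (G.degree x : ℝ) := by exact_mod_cast hd x
    have h3 := pushSum_nonneg G α hα0' hα1 x init hr0 us
    positivity
  -- maximum of t
  obtain ⟨w0, -, hw0⟩ := Finset.exists_max_image (Finset.univ : Finset V) t ⟨u, Finset.mem_univ u⟩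
  have hw0' : ∀ x, t x ≤ t w0 := fun x => hw0 x (Finset.mem_univ x)
  -- bound t w0
  have hdw0 : (0:ℝ) < (G.degree w0 : ℝ) := by exact_mod_cast hd w0
  have hrT : 0 ≤ (runState G α init us).2 w0 :=
    runState_r_nonneg G α hα0' hα1 init hr0 us w0
  have hcons := conservation G α init us w0
  have hsum : ∑ x ∈ G.neighborFinset w0, (1 - α) / (2 * (G.degree x : ℝ)) *
      pushSum G α x init us ≤ (G.degree w0 : ℝ) * t w0 := by
    calc ∑ x ∈ G.neighborFinset w0, (1 - α) / (2 * (G.degree x : ℝ)) * pushSum G α x init us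
        = ∑ x ∈ G.neighborFinset w0, t x := by rfl
      _ ≤ ∑ _x ∈ G.neighborFinset w0, t w0 :=
          Finset.sum_le_sum fun x _ => hw0' x
      _ = (G.degree w0 : ℝ) * t w0 := by
          rw [Finset.sum_const, G.card_neighborFinset_eq_degree, nsmul_eq_mul]
  have hinit : init.2 w0 ≤ σ * (G.degree w0 : ℝ) := by
    have := hrσ w0
    rw [div_le_iff₀ hdw0] at this
    linarith
  have hP : (1 + α) / 2 * pushSum G α w0 init us ≤ σ * (G.degree w0 : ℝ) + (G.degree w0 : ℝ) * t w0 := by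
    linarith [hrT, hcons, hsum, hinit]
  have htw0 : (G.degree w0 : ℝ) * t w0 = (1 - α) / 2 * pushSum G α w0 init us := by
    simp only [ht]
    field_simp
  have hPσ : α * pushSum G α w0 init us ≤ σ * (G.degree w0 : ℝ) := by
    rw [htw0] at hP
    linarith
  have hPnn : 0 ≤ pushSum G α w0 init us := pushSum_nonneg G α hα0' hα1 w0 init hr0 us
  have hMain : t w0 ≤ σ / (2 * α) := by
    show (1 - α) / (2 * (G.degree w0 : ℝ)) * pushSum G α w0 init us ≤ σ / (2 * α)
    rw [div_mul_eq_mul_div, div_le_div_iff₀ (by positivity) (by positivity)]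
    nlinarith [mul_nonneg (mul_nonneg hα0' hα0') hPnn, hd w0,
      mul_le_mul_of_nonneg_left hPσ (le_of_lt hdw0)]
  rw [netFlow_eq_pushSum]
  have h1 : t u ≤ σ / (2 * α) := le_trans (hw0' u) hMain
  have h2 : t v ≤ σ / (2 * α) := le_trans (hw0' v) hMain
  have h3 := ht_nonneg u
  have h4 := ht_nonneg v
  rw [abs_le]
  constructor <;> simp only [ht] at h1 h2 h3 h4 <;> linarith

end
end

section
/- Let G be a finite simple graph with no isolated vertices and m ≥ 1 edges, let 0 < α ≤ 1/3, and let p be the settled mass after any run of pushes starting from (p₀, r₀) with p₀ = 0, r₀ = p° ≥ 0 and ∑_v p°(v) = 1. Suppose 0 ≤ t₀ < τ ≤ 1, vol(V^p_{>t₀}) ≤ m, and V^p_{≥τ} is nonempty. Then there exists t ∈ (t₀, τ] such that Φ(V^p_{≥t}) ≤ sqrt( 42α / ((τ − t₀) · vol(V^p_{≥τ})) ). -/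
open scoped Classical
open Finset

noncomputable section

variable {V : Type*} [Fintype V]

/-- The set of vertices of density at least `t` with respect to the mass distribution `p`. -/
def Vge (G : SimpleGraph V) (p : V → ℝ) (t : ℝ) : Finset V :=
  Finset.univ.filter fun v => t ≤ p v / (G.degree v : ℝ)

/-- The set of vertices of density greater than `t` with respect to the mass distribution `p`. -/
def Vgt (G : SimpleGraph V) (p : V → ℝ) (t : ℝ) : Finset V :=
  Finset.univ.filter fun v => t < p v / (G.degree v : ℝ)

/-- The set of vertices of density less than `t` with respect to the mass distribution `p`. -/
def Vlt (G : SimpleGraph V) (p : V → ℝ) (t : ℝ) : Finset V :=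
  Finset.univ.filter fun v => p v / (G.degree v : ℝ) < t

section auxsection
variable {V : Type*} [Fintype V]

def dnsty (G : SimpleGraph V) (p : V → ℝ) (v : V) : ℝ := p v / (G.degree v : ℝ)

def cutSum (G : SimpleGraph V) (S : Finset V) (p : V → ℝ) : ℝ :=
  ∑ u ∈ S, ∑ v ∈ Sᶜ, if G.Adj u v then dnsty G p u - dnsty G p v else 0

def Qfun (G : SimpleGraph V) (α : ℝ) (S : Finset V) (s : (V → ℝ) × (V → ℝ)) : ℝ :=
  (∑ v ∈ S, (s.1 v + s.2 v)) + ((1 - α) / (2 * α)) * cutSum G S s.1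

lemma card_filter_adj (G : SimpleGraph V) (S : Finset V) (w : V) :
    (S.filter (fun v => G.Adj w v)).card + (Sᶜ.filter (fun v => G.Adj w v)).card
      = G.degree w := by
  have h1 : S.filter (fun v => G.Adj w v) ∪ Sᶜ.filter (fun v => G.Adj w v)
      = univ.filter (fun v => G.Adj w v) := by
    ext x; simp [Finset.mem_filter, Finset.mem_union]; tauto
  have h2 : Disjoint (S.filter (fun v => G.Adj w v)) (Sᶜ.filter (fun v => G.Adj w v)) := by
    exact Finset.disjoint_filter_filter (disjoint_compl_right)
  have h3 : univ.filter (fun v => G.Adj w v) = G.neighborFinset w := by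
    ext x; simp [SimpleGraph.mem_neighborFinset]
  rw [← Finset.card_union_of_disjoint h2, h1, h3]
  rfl

lemma sum_push_p (G : SimpleGraph V) (α : ℝ) (w : V) (s : (V → ℝ) × (V → ℝ)) (S : Finset V) :
    ∑ v ∈ S, (push G α w s).1 v
      = ∑ v ∈ S, s.1 v + (if w ∈ S then α * s.2 w else 0) := by
  have : ∀ v, (push G α w s).1 v = s.1 v + (if v = w then α * s.2 w else 0) := by
    intro v
    by_cases h : v = w <;> simp [push, h]
  simp only [this, Finset.sum_add_distrib, Finset.sum_ite_eq']

lemma sum_push_r (G : SimpleGraph V) (α : ℝ) (w : V) (s : (V → ℝ) × (V → ℝ)) (S : Finset V) :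
    ∑ v ∈ S, (push G α w s).2 v
      = ∑ v ∈ S, s.2 v + (if w ∈ S then (1 - α) * s.2 w / 2 - s.2 w else 0)
        + ((S.filter (fun v => G.Adj w v)).card : ℝ)
            * ((1 - α) * s.2 w / (2 * (G.degree w : ℝ))) := by
  have : ∀ v, (push G α w s).2 v = s.2 v + (if v = w then (1 - α) * s.2 w / 2 - s.2 w else 0)
      + (if G.Adj w v then (1 - α) * s.2 w / (2 * (G.degree w : ℝ)) else 0) := by
    intro v
    by_cases h : v = w
    · subst h; simp [push, G.irrefl]
    · simp only [push, h, if_false]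
      by_cases hadj : G.Adj w v <;> simp [hadj]
  simp only [this, Finset.sum_add_distrib, Finset.sum_ite_eq']
  rw [← Finset.sum_filter]
  simp [mul_comm]

lemma dnsty_push (G : SimpleGraph V) (α : ℝ) (w : V) (s : (V → ℝ) × (V → ℝ)) (v : V) :
    dnsty G (push G α w s).1 v
      = dnsty G s.1 v + (if v = w then α * s.2 w / (G.degree w : ℝ) else 0) := by
  by_cases h : v = w
  · subst h; simp [dnsty, push, add_div]
  · simp [dnsty, push, h]

lemma cutSum_push (G : SimpleGraph V) (α : ℝ) (w : V) (s : (V → ℝ) × (V → ℝ)) (S : Finset V) :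
    cutSum G S (push G α w s).1
      = cutSum G S s.1
        + (if w ∈ S then (α * s.2 w / (G.degree w : ℝ))
              * ((Sᶜ.filter (fun v => G.Adj w v)).card : ℝ) else 0)
        - (if w ∈ Sᶜ then (α * s.2 w / (G.degree w : ℝ))
              * ((S.filter (fun v => G.Adj w v)).card : ℝ) else 0) := by
  classical
  have key : ∀ u v, (if G.Adj u v then dnsty G (push G α w s).1 u - dnsty G (push G α w s).1 v else 0)
      = (if G.Adj u v then dnsty G s.1 u - dnsty G s.1 v else 0)
        + (if u = w then (if G.Adj u v then α * s.2 w / (G.degree w : ℝ) else 0) else 0)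
        - (if v = w then (if G.Adj u v then α * s.2 w / (G.degree w : ℝ) else 0) else 0) := by
    intro u v
    rw [dnsty_push, dnsty_push]
    split_ifs <;> ring
  unfold cutSum
  simp only [key]
  simp only [Finset.sum_add_distrib, Finset.sum_sub_distrib]
  have EB : (∑ u ∈ S, ∑ v ∈ Sᶜ, if u = w then (if G.Adj u v then α * s.2 w / (G.degree w : ℝ) else 0) else 0)
      = (if w ∈ S then (α * s.2 w / (G.degree w : ℝ))
          * ((Sᶜ.filter (fun v => G.Adj w v)).card : ℝ) else 0) := by
    have h1 : ∀ u ∈ S, (∑ v ∈ Sᶜ, if u = w then (if G.Adj u v then α * s.2 w / (G.degree w : ℝ) else 0) else 0)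
        = (if u = w then (∑ v ∈ Sᶜ, if G.Adj w v then α * s.2 w / (G.degree w : ℝ) else 0) else 0) := by
      intro u _
      by_cases h : u = w <;> simp [h]
    rw [Finset.sum_congr rfl h1, Finset.sum_ite_eq']
    by_cases hw : w ∈ S <;>
      simp [hw, ← Finset.sum_filter, Finset.sum_const, nsmul_eq_mul, mul_comm]
  have EC : (∑ u ∈ S, ∑ v ∈ Sᶜ, if v = w then (if G.Adj u v then α * s.2 w / (G.degree w : ℝ) else 0) else 0)
      = (if w ∈ Sᶜ then (α * s.2 w / (G.degree w : ℝ))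
          * ((S.filter (fun v => G.Adj w v)).card : ℝ) else 0) := by
    rw [Finset.sum_comm]
    have h1 : ∀ v ∈ Sᶜ, (∑ u ∈ S, if v = w then (if G.Adj u v then α * s.2 w / (G.degree w : ℝ) else 0) else 0)
        = (if v = w then (∑ u ∈ S, if G.Adj w u then α * s.2 w / (G.degree w : ℝ) else 0) else 0) := by
      intro v _
      by_cases h : v = w
      · subst h
        simp only [if_true]
        apply Finset.sum_congr rfl
        intro u _
        rw [G.adj_comm]
      · simp [h]
    rw [Finset.sum_congr rfl h1, Finset.sum_ite_eq']
    by_cases hw : w ∈ Sᶜ <;>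
      simp [hw, ← Finset.sum_filter, Finset.sum_const, nsmul_eq_mul, mul_comm]
  rw [EB, EC]

lemma Qfun_push (G : SimpleGraph V) (α : ℝ) (hα0 : 0 < α) (hd : ∀ v : V, 0 < G.degree v)
    (w : V) (s : (V → ℝ) × (V → ℝ)) (S : Finset V) :
    Qfun G α S (push G α w s) = Qfun G α S s := by
  classical
  unfold Qfun
  rw [Finset.sum_add_distrib, Finset.sum_add_distrib (f := fun v => s.1 v) (g := fun v => s.2 v)]
  rw [sum_push_p, sum_push_r, cutSum_push]
  have hdw : ((G.degree w : ℝ)) ≠ 0 := by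
    exact_mod_cast (hd w).ne'
  have hcard := card_filter_adj G S w
  have hab : ((S.filter (fun v => G.Adj w v)).card : ℝ)
      + ((Sᶜ.filter (fun v => G.Adj w v)).card : ℝ) = (G.degree w : ℝ) := by
    rw [← Nat.cast_add, hcard]
  have hb : ((Sᶜ.filter (fun v => G.Adj w v)).card : ℝ)
      = (G.degree w : ℝ) - ((S.filter (fun v => G.Adj w v)).card : ℝ) := by linarith
  by_cases hw : w ∈ S
  · have hw' : w ∉ Sᶜ := by simp [hw]
    simp only [hw, hw', if_true, if_false]
    rw [hb]
    field_simp
    ring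
  · have hw' : w ∈ Sᶜ := by simp [hw]
    simp only [hw, hw', if_true, if_false]
    field_simp
    ring

lemma push_nonneg (G : SimpleGraph V) (α : ℝ) (hα0 : 0 < α) (hα1 : α ≤ 1) (w : V)
    (s : (V → ℝ) × (V → ℝ)) (hp : ∀ v, 0 ≤ s.1 v) (hr : ∀ v, 0 ≤ s.2 v) :
    (∀ v, 0 ≤ (push G α w s).1 v) ∧ (∀ v, 0 ≤ (push G α w s).2 v) := by
  constructor
  · intro v
    by_cases h : v = w
    · subst h; simp only [push, if_pos rfl]
      exact add_nonneg (hp v) (mul_nonneg hα0.le (hr v))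
    · simpa [push, h] using hp v
  · intro v
    have h1 : (0:ℝ) ≤ 1 - α := by linarith
    by_cases h : v = w
    · subst h; simp only [push, if_pos rfl]
      exact div_nonneg (mul_nonneg h1 (hr v)) (by norm_num)
    · simp only [push, h, if_false]
      by_cases hadj : G.Adj w v
      · simp only [hadj, if_true]
        exact add_nonneg (hr v) (div_nonneg (mul_nonneg h1 (hr w)) (by positivity))
      · simpa [hadj] using hr v

lemma run_nonneg (G : SimpleGraph V) (α : ℝ) (hα0 : 0 < α) (hα1 : α ≤ 1)
    (init : (V → ℝ) × (V → ℝ)) (hp : ∀ v, 0 ≤ init.1 v) (hr : ∀ v, 0 ≤ init.2 v)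
    (us : List V) :
    (∀ v, 0 ≤ (runState G α init us).1 v) ∧ (∀ v, 0 ≤ (runState G α init us).2 v) := by
  induction us generalizing init with
  | nil => exact ⟨hp, hr⟩
  | cons u us ih =>
      have h := push_nonneg G α hα0 hα1 u init hp hr
      exact ih (push G α u init) h.1 h.2

lemma run_Q (G : SimpleGraph V) (α : ℝ) (hα0 : 0 < α) (hd : ∀ v : V, 0 < G.degree v)
    (S : Finset V) (init : (V → ℝ) × (V → ℝ)) (us : List V) :
    Qfun G α S (runState G α init us) = Qfun G α S init := by
  induction us generalizing init with
  | nil => rfl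
  | cons u us ih =>
      rw [show runState G α init (u :: us) = runState G α (push G α u init) us from rfl,
        ih, Qfun_push G α hα0 hd]

/-- The main consequence: the cut sum of the final settled mass is at most `3α`. -/
lemma cutSum_le (G : SimpleGraph V) (α : ℝ) (hα0 : 0 < α) (hα : α ≤ 1/3)
    (hd : ∀ v : V, 0 < G.degree v)
    (p0 : V → ℝ) (hp0 : ∀ v, 0 ≤ p0 v) (hsum : ∑ v, p0 v = 1)
    (us : List V) (S : Finset V) :
    cutSum G S (runState G α ((fun _ => 0), p0) us).1 ≤ 3 * α := by
  have hα1 : α ≤ 1 := by linarith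
  have hQ := run_Q G α hα0 hd S ((fun _ => 0), p0) us
  have hnn := run_nonneg G α hα0 hα1 ((fun _ => 0), p0) (fun _ => le_refl 0) hp0 us
  set fin := runState G α ((fun _ => 0), p0) us with hfin
  have hQ0 : Qfun G α S ((fun _ => 0), p0) = ∑ v ∈ S, p0 v := by
    unfold Qfun cutSum dnsty
    simp
  have hle1 : ∑ v ∈ S, p0 v ≤ 1 := by
    rw [← hsum]
    exact Finset.sum_le_sum_of_subset_of_nonneg (Finset.subset_univ S)
      (fun v _ _ => hp0 v)
  have hnn2 : 0 ≤ ∑ v ∈ S, (fin.1 v + fin.2 v) :=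
    Finset.sum_nonneg (fun v _ => add_nonneg (hnn.1 v) (hnn.2 v))
  have hK : (0:ℝ) < (1 - α) / (2 * α) := by
    apply div_pos <;> linarith
  have hcs : (1 - α) / (2 * α) * cutSum G S fin.1 ≤ 1 := by
    have := hQ.trans hQ0
    unfold Qfun at this
    linarith
  have h2 : cutSum G S fin.1 ≤ 2 * α / (1 - α) := by
    rw [← le_div_iff₀' hK] at hcs
    calc cutSum G S fin.1 ≤ 1 / ((1 - α) / (2 * α)) := hcs
    _ = 2 * α / (1 - α) := one_div_div _ _
  calc cutSum G S fin.1 ≤ 2 * α / (1 - α) := h2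
  _ ≤ 3 * α := by
      rw [div_le_iff₀ (by linarith : (0:ℝ) < 1 - α)]
      nlinarith

end auxsection

section auxsection2
open MeasureTheory
/-- length of Ioc -/
def lenI (a b : ℝ) : ℝ := ((volume (Set.Ioc a b)).toReal)

lemma lenI_eq (a b : ℝ) : lenI a b = max (b - a) 0 := by
  rw [lenI, Real.volume_Ioc]
  rcases le_total (b - a) 0 with h | h
  · rw [ENNReal.ofReal_eq_zero.2 h]; simp [max_eq_right h]
  · rw [ENNReal.toReal_ofReal h, max_eq_left h]

lemma lenI_nonneg (a b : ℝ) : 0 ≤ lenI a b := ENNReal.toReal_nonneg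

lemma lenI_le (a b a' b' : ℝ) (ha : a' ≤ a) (hb : b ≤ b') : lenI a b ≤ lenI a' b' := by
  rw [lenI, lenI]
  have h1 : Set.Ioc a b ⊆ Set.Ioc a' b' := Set.Ioc_subset_Ioc ha hb
  exact ENNReal.toReal_mono (by rw [Real.volume_Ioc]; exact ENNReal.ofReal_ne_top)
    (measure_mono h1)

lemma integrable_ind (a b c : ℝ) :
    Integrable ((Set.Ioc a b).indicator (fun _ => c)) := by
  rw [integrable_indicator_iff measurableSet_Ioc]
  refine integrableOn_const ?_
  rw [Real.volume_Ioc]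
  exact ENNReal.ofReal_ne_top

lemma integral_ind (a b c : ℝ) :
    ∫ t, (Set.Ioc a b).indicator (fun _ => c) t = lenI a b * c := by
  rw [integral_indicator_const c measurableSet_Ioc, lenI, smul_eq_mul]
  rfl

/-- rank-counting lemma -/
lemma rank_sum {Q : Type*} [DecidableEq Q] (F : ℕ → ℝ) (hF : ∀ i j, i ≤ j → F j ≤ F i)
    (hF0 : ∀ i, 0 ≤ F i) :
    ∀ (s : Finset Q) (θ : Q → ℝ),
      ∑ q ∈ s, F ((s.filter (fun q' => θ q ≤ θ q')).card) ≤ ∑ i ∈ Finset.Icc 1 s.card, F i := by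
  intro s
  induction s using Finset.strongInduction with
  | _ s ih =>
    intro θ
    rcases s.eq_empty_or_nonempty with rfl | hs
    · simp
    · obtain ⟨q0, hq0, hmin⟩ := Finset.exists_min_image s θ hs
      have hs' : s.erase q0 ⊂ s := Finset.erase_ssubset hq0
      have hcard : (s.erase q0).card = s.card - 1 := Finset.card_erase_of_mem hq0
      have hpos : 1 ≤ s.card := Finset.card_pos.2 hs
      -- the term at q0 equals F (s.card)
      have hq0term : (s.filter (fun q' => θ q0 ≤ θ q')).card = s.card := by
        congr 1
        apply Finset.filter_true_of_mem
        intro x hx; exact hmin x hx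
      have hstep : ∀ q ∈ s.erase q0,
          F ((s.filter (fun q' => θ q ≤ θ q')).card)
            ≤ F (((s.erase q0).filter (fun q' => θ q ≤ θ q')).card) := by
        intro q hq
        apply hF
        apply Finset.card_le_card
        apply Finset.filter_subset_filter
        exact Finset.erase_subset _ _
      calc ∑ q ∈ s, F ((s.filter (fun q' => θ q ≤ θ q')).card)
          = F ((s.filter (fun q' => θ q0 ≤ θ q')).card)
            + ∑ q ∈ s.erase q0, F ((s.filter (fun q' => θ q ≤ θ q')).card) := by
            rw [← Finset.sum_erase_add s _ hq0]; ring
        _ ≤ F s.card + ∑ q ∈ s.erase q0, F (((s.erase q0).filter (fun q' => θ q ≤ θ q')).card) := by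
            rw [hq0term]
            exact add_le_add le_rfl (Finset.sum_le_sum hstep)
        _ ≤ F s.card + ∑ i ∈ Finset.Icc 1 (s.erase q0).card, F i :=
            add_le_add le_rfl (ih _ hs' θ)
        _ = ∑ i ∈ Finset.Icc 1 s.card, F i := by
            rw [hcard]
            have : Finset.Icc 1 s.card = insert s.card (Finset.Icc 1 (s.card - 1)) := by
              ext i
              simp only [Finset.mem_Icc, Finset.mem_insert]
              omega
            rw [this, Finset.sum_insert (by simp only [Finset.mem_Icc]; omega)]

/-- tail bound : ∑_{i∈Icc (K+1) N} 1/i^2 ≤ 1/K -/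
lemma tail_sum (K : ℕ) (hK : 1 ≤ K) : ∀ N : ℕ,
    ∑ i ∈ Finset.Icc (K+1) N, (1:ℝ)/(i:ℝ)^2 ≤ 1/K - 1/(max K N) := by
  intro N
  induction N with
  | zero => simp [Nat.max_eq_left hK]
  | succ N ihN =>
      rcases le_or_gt (N+1) K with h | h
      · have : Finset.Icc (K+1) (N+1) = ∅ := by
          apply Finset.Icc_eq_empty; omega
        rw [this, Nat.max_eq_left h]
        simp
      · have hNK : K ≤ N := by omega
        have hmax : max K N = N := Nat.max_eq_right hNK
        have hmax' : max K (N+1) = N+1 := Nat.max_eq_right (by omega)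
        have hN1 : 1 ≤ N := le_trans hK hNK
        have hins : Finset.Icc (K+1) (N+1) = insert (N+1) (Finset.Icc (K+1) N) := by
          ext i; simp only [Finset.mem_Icc, Finset.mem_insert]; omega
        rw [hins, Finset.sum_insert (by simp only [Finset.mem_Icc]; omega), hmax']
        have hNpos : (0:ℝ) < N := by exact_mod_cast hN1
        have hN1pos : (0:ℝ) < (N:ℝ)+1 := by linarith
        have key : (1:ℝ)/((N+1:ℕ):ℝ)^2 ≤ 1/(N:ℝ) - 1/((N:ℝ)+1) := by
          push_cast
          rw [div_sub_div _ _ (ne_of_gt hNpos) (ne_of_gt hN1pos)]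
          rw [div_le_div_iff₀ (by positivity) (by positivity)]
          ring_nf
          nlinarith
        rw [hmax] at ihN
        push_cast at key ⊢
        linarith

end auxsection2

section auxsection3
variable {V : Type*} [Fintype V]
lemma mem_Vge {G : SimpleGraph V} {p : V → ℝ} {t : ℝ} {v : V} :
    v ∈ Vge G p t ↔ t ≤ dnsty G p v := by
  simp [Vge, dnsty]

lemma Vge_anti {G : SimpleGraph V} {p : V → ℝ} {t t' : ℝ} (h : t ≤ t') :
    Vge G p t' ⊆ Vge G p t := by
  intro v hv
  rw [mem_Vge] at *
  linarith

lemma vol_mono (G : SimpleGraph V) {S T : Finset V} (h : S ⊆ T) : vol G S ≤ vol G T :=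
  Finset.sum_le_sum_of_subset h

lemma mk_out_ite (G : SimpleGraph V) (p : V → ℝ) (e : Sym2 V) :
    Function.uncurry Sym2.mk (if dnsty G p e.out.2 < dnsty G p e.out.1 then e.out else e.out.swap) = e := by
  by_cases h : dnsty G p e.out.2 < dnsty G p e.out.1
  · rw [if_pos h]; exact e.out_eq
  · rw [if_neg h]; show s(e.out.2, e.out.1) = e; rw [Sym2.eq_swap]; exact e.out_eq

/-- The key injection: the boundary edge count of a sweep set is at most the number of
descending adjacent ordered pairs crossing level t. -/
lemma bdry_card_le (G : SimpleGraph V) (p : V → ℝ) (t : ℝ) :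
    ((bdry G (Vge G p t)).card : ℕ)
      ≤ ((Finset.univ.filter (fun q : V × V =>
           G.Adj q.1 q.2 ∧ dnsty G p q.2 < t ∧ t ≤ dnsty G p q.1)).card) := by
  apply Finset.card_le_card_of_injOn
    (fun e => if dnsty G p e.out.2 < dnsty G p e.out.1 then e.out else e.out.swap)
  · intro e he
    simp only [bdry, Finset.mem_coe, Finset.mem_filter] at he
    obtain ⟨hef, u, v, hu, hv, rfl⟩ := he
    rw [mem_Vge] at hu
    rw [mem_Vge] at hv
    push_neg at hv
    have hadj : G.Adj u v := by
      rw [← SimpleGraph.mem_edgeSet]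
      exact SimpleGraph.mem_edgeFinset.1 hef
    have hout : s((s(u,v)).out.1, (s(u,v)).out.2) = s(u, v) := (s(u,v)).out_eq
    have hcases : (s(u,v)).out = (u, v) ∨ (s(u,v)).out = (v, u) := by
      have h2 := (Sym2.mk_eq_mk_iff (p := (s(u,v)).out) (q := ((u,v) : V × V))).1 (hout.trans (rfl : s(u,v) = s(((u,v) : V × V).1, ((u,v) : V × V).2)))
      rcases h2 with h2 | h2
      · left; exact h2
      · right; exact h2
    have hlt : dnsty G p v < dnsty G p u := lt_of_lt_of_le hv hu
    rcases hcases with h | h <;>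
      simp only [h, Finset.mem_coe, Finset.mem_filter, Finset.mem_univ, true_and]
    · rw [if_pos hlt]
      exact ⟨hadj, hv, hu⟩
    · have hnot : ¬ (dnsty G p ((v, u) : V × V).2 < dnsty G p ((v, u) : V × V).1) :=
        not_lt.2 hlt.le
      rw [if_neg hnot]
      exact ⟨hadj, hv, hu⟩
  · intro e1 _ e2 _ heq
    simp only at heq
    calc e1 = Function.uncurry Sym2.mk (if dnsty G p e1.out.2 < dnsty G p e1.out.1 then e1.out else e1.out.swap) :=
          (mk_out_ite G p e1).symm
    _ = Function.uncurry Sym2.mk (if dnsty G p e2.out.2 < dnsty G p e2.out.1 then e2.out else e2.out.swap) := by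
          rw [heq]
    _ = e2 := mk_out_ite G p e2

end auxsection3

section mainaux
open MeasureTheory
variable {V : Type*} [Fintype V]

/-- counting: pairs with high top density are at most the volume of the sweep set -/
lemma count_le (G : SimpleGraph V) (p : V → ℝ) (E : Finset (V × V))
    (hE : ∀ q ∈ E, G.Adj q.1 q.2) (b : ℝ) :
    ((E.filter (fun q' => b ≤ dnsty G p q'.1)).card) ≤ vol G (Vge G p b) := by
  classical
  have hsub : E.filter (fun q' => b ≤ dnsty G p q'.1)
      ⊆ (Vge G p b).biUnion (fun u => (G.neighborFinset u).image (fun v => (u, v))) := by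
    intro q hq
    simp only [Finset.mem_filter] at hq
    rw [Finset.mem_biUnion]
    refine ⟨q.1, mem_Vge.2 hq.2, ?_⟩
    rw [Finset.mem_image]
    exact ⟨q.2, by rw [SimpleGraph.mem_neighborFinset]; exact hE q hq.1, by simp⟩
  calc (E.filter (fun q' => b ≤ dnsty G p q'.1)).card
      ≤ ((Vge G p b).biUnion (fun u => (G.neighborFinset u).image (fun v => (u, v)))).card :=
        Finset.card_le_card hsub
  _ ≤ ∑ u ∈ Vge G p b, ((G.neighborFinset u).image (fun v => (u, v))).card :=
        Finset.card_biUnion_le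
  _ ≤ ∑ u ∈ Vge G p b, G.degree u := by
        apply Finset.sum_le_sum
        intro u _
        exact le_trans (Finset.card_image_le) (le_of_eq rfl)
  _ = vol G (Vge G p b) := rfl

lemma Fsum_le (K : ℕ) (hK : 1 ≤ K) (N : ℕ) :
    ∑ i ∈ Finset.Icc 1 N, (1:ℝ) / (max (K:ℝ) (i:ℝ))^2 ≤ 2 / (K:ℝ) := by
  have hKR : (1:ℝ) ≤ (K:ℝ) := by exact_mod_cast hK
  have hKpos : (0:ℝ) < (K:ℝ) := by linarith
  have hhead : ∀ M : ℕ, M ≤ K → ∑ i ∈ Finset.Icc 1 M, (1:ℝ) / (max (K:ℝ) (i:ℝ))^2 ≤ 1 / (K:ℝ) := by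
    intro M hM
    have : ∀ i ∈ Finset.Icc 1 M, (1:ℝ) / (max (K:ℝ) (i:ℝ))^2 = 1 / (K:ℝ)^2 := by
      intro i hi
      simp only [Finset.mem_Icc] at hi
      have : (i:ℝ) ≤ (K:ℝ) := by exact_mod_cast le_trans hi.2 hM
      rw [max_eq_left this]
    rw [Finset.sum_congr rfl this, Finset.sum_const]
    rw [nsmul_eq_mul]
    have hMK : (M:ℝ) ≤ (K:ℝ) := by exact_mod_cast hM
    have hcard : ((Finset.Icc 1 M).card : ℝ) ≤ (K:ℝ) := by
      rw [Nat.card_Icc]; push_cast; linarith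
    calc ((Finset.Icc 1 M).card : ℝ) * (1 / (K:ℝ)^2) ≤ (K:ℝ) * (1 / (K:ℝ)^2) := by
          apply mul_le_mul_of_nonneg_right hcard; positivity
    _ = 1 / (K:ℝ) := by field_simp
  rcases le_or_gt N K with h | h
  · calc ∑ i ∈ Finset.Icc 1 N, (1:ℝ) / (max (K:ℝ) (i:ℝ))^2 ≤ 1 / (K:ℝ) := hhead N h
    _ ≤ 2 / (K:ℝ) := by apply div_le_div_of_nonneg_right <;> try linarith
  · have hsplit : Finset.Icc 1 N = Finset.Icc 1 K ∪ Finset.Icc (K+1) N := by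
      ext i; simp only [Finset.mem_Icc, Finset.mem_union]; omega
    have hdisj : Disjoint (Finset.Icc 1 K) (Finset.Icc (K+1) N) := by
      rw [Finset.disjoint_left]
      intro i hi1 hi2
      simp only [Finset.mem_Icc] at hi1 hi2
      omega
    rw [hsplit, Finset.sum_union hdisj]
    have htail : ∑ i ∈ Finset.Icc (K+1) N, (1:ℝ) / (max (K:ℝ) (i:ℝ))^2 ≤ 1 / (K:ℝ) := by
      have heq : ∀ i ∈ Finset.Icc (K+1) N, (1:ℝ) / (max (K:ℝ) (i:ℝ))^2 = 1 / (i:ℝ)^2 := by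
        intro i hi
        simp only [Finset.mem_Icc] at hi
        have : (K:ℝ) ≤ (i:ℝ) := by exact_mod_cast le_trans (Nat.le_succ K) hi.1
        rw [max_eq_right this]
      rw [Finset.sum_congr rfl heq]
      have := tail_sum K hK N
      have hmax : (0:ℝ) ≤ 1 / (max K N : ℕ) := by positivity
      calc ∑ i ∈ Finset.Icc (K+1) N, (1:ℝ)/(i:ℝ)^2 ≤ 1/(K:ℝ) - 1/((max K N : ℕ):ℝ) := this
      _ ≤ 1 / (K:ℝ) := by linarith
    have := hhead K le_rfl
    calc ∑ i ∈ Finset.Icc 1 K, (1:ℝ) / (max (K:ℝ) (i:ℝ))^2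
        + ∑ i ∈ Finset.Icc (K+1) N, (1:ℝ) / (max (K:ℝ) (i:ℝ))^2
        ≤ 1/(K:ℝ) + 1/(K:ℝ) := add_le_add this htail
    _ = 2 / (K:ℝ) := by ring

end mainaux

theorem stmt11 {V : Type*} [Fintype V] (G : SimpleGraph V)
    (m : ℕ) (hm : m = G.edgeFinset.card) (hm1 : 1 ≤ m)
    (hd : ∀ v : V, 0 < G.degree v)
    (α : ℝ) (hα0 : 0 < α) (hα : α ≤ 1 / 3)
    (p0 : V → ℝ) (hp0 : ∀ v, 0 ≤ p0 v) (hsum : ∑ v, p0 v = 1)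
    (us : List V)
    (p : V → ℝ) (hp : p = (runState G α ((fun _ => 0), p0) us).1)
    (t0 τ : ℝ) (ht0 : 0 ≤ t0) (htτ : t0 < τ) (hτ1 : τ ≤ 1)
    (hvol : vol G (Vgt G p t0) ≤ m)
    (hne : (Vge G p τ).Nonempty) :
    ∃ t : ℝ, t0 < t ∧ t ≤ τ ∧
      conduct G (Vge G p t) ≤
        Real.sqrt (42 * α / ((τ - t0) * (vol G (Vge G p τ) : ℝ))) := by
  classical
  by_contra hcon
  push_neg at hcon
  have hΔ : (0:ℝ) < τ - t0 := by linarith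
  have hKτ1 : 1 ≤ vol G (Vge G p τ) := by
    obtain ⟨v, hv⟩ := hne
    calc 1 ≤ G.degree v := hd v
    _ ≤ vol G (Vge G p τ) :=
          Finset.single_le_sum (f := fun w => G.degree w) (fun w _ => Nat.zero_le _) hv
  have hKτR : (1:ℝ) ≤ ((vol G (Vge G p τ) : ℕ):ℝ) := by exact_mod_cast hKτ1
  have hKτpos : (0:ℝ) < ((vol G (Vge G p τ) : ℕ):ℝ) := by linarith
  set φ := Real.sqrt (42 * α / ((τ - t0) * ((vol G (Vge G p τ) : ℕ):ℝ))) with hφdef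
  have hφarg : 0 ≤ 42 * α / ((τ - t0) * ((vol G (Vge G p τ) : ℕ):ℝ)) := by positivity
  have hφsq : φ^2 = 42 * α / ((τ - t0) * ((vol G (Vge G p τ) : ℕ):ℝ)) := Real.sq_sqrt hφarg
  have hφ0 : (0:ℝ) ≤ φ := Real.sqrt_nonneg _
  -- sweep set facts
  have hvolt : ∀ t, t0 < t → vol G (Vge G p t) ≤ m := by
    intro t ht
    refine le_trans (vol_mono G ?_) hvol
    intro v hv
    rw [mem_Vge] at hv
    simp only [Vgt, Finset.mem_filter, Finset.mem_univ, true_and]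
    exact lt_of_lt_of_le ht hv
  have hVτ_le : ∀ t, t ≤ τ → vol G (Vge G p τ) ≤ vol G (Vge G p t) :=
    fun t ht => vol_mono G (Vge_anti ht)
  have hvolpos : ∀ t, t ≤ τ → 0 < ((vol G (Vge G p t) : ℕ):ℝ) := by
    intro t ht
    have h1 := hVτ_le t ht
    have h2 : ((vol G (Vge G p τ) : ℕ):ℝ) ≤ ((vol G (Vge G p t) : ℕ):ℝ) := by exact_mod_cast h1
    linarith
  have hA : ∀ t, t0 < t → t ≤ τ →
      φ * ((vol G (Vge G p t) : ℕ):ℝ) < (((bdry G (Vge G p t)).card : ℕ):ℝ) := by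
    intro t h1 h2
    have hc := hcon t h1 h2
    have hmin : min (vol G (Vge G p t)) (2 * G.edgeFinset.card - vol G (Vge G p t))
        = vol G (Vge G p t) := by
      have h3 := hvolt t h1
      rw [← hm]
      omega
    rw [conduct, hmin] at hc
    have hVpos := hvolpos t h2
    calc φ * ((vol G (Vge G p t) : ℕ):ℝ)
        < ((((bdry G (Vge G p t)).card : ℕ):ℝ) / ((vol G (Vge G p t) : ℕ):ℝ))
            * ((vol G (Vge G p t) : ℕ):ℝ) := mul_lt_mul_of_pos_right hc hVpos
    _ = (((bdry G (Vge G p t)).card : ℕ):ℝ) := div_mul_cancel₀ _ (ne_of_gt hVpos)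
  -- the descending pair set
  set D : Finset (V × V) := Finset.univ.filter
    (fun q : V × V => G.Adj q.1 q.2 ∧ dnsty G p q.2 < dnsty G p q.1) with hD
  set lo : V × V → ℝ := fun q => max t0 (dnsty G p q.2) with hlo
  set hi : V × V → ℝ := fun q => min τ (dnsty G p q.1) with hhi
  set lng : V × V → ℝ := fun q => lenI (lo q) (hi q) with hlng
  set W : V × V → ℝ := fun q => ((vol G (Vge G p (hi q)) : ℕ):ℝ) with hWdef
  have hlng0 : ∀ q, 0 ≤ lng q := fun q => lenI_nonneg _ _
  have hWeq : ∀ q, W q = ((vol G (Vge G p (hi q)) : ℕ):ℝ) := fun q => rfl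
  have hW_ge : ∀ q, ((vol G (Vge G p τ) : ℕ):ℝ) ≤ W q := by
    intro q
    rw [hWeq]
    have := hVτ_le (hi q) (min_le_left _ _)
    exact_mod_cast this
  have hWpos : ∀ q, (0:ℝ) < W q := fun q => lt_of_lt_of_le hKτpos (hW_ge q)
  -- filter identity at level t
  have hDt : ∀ t, t0 < t → t ≤ τ →
      D.filter (fun q => t ∈ Set.Ioc (lo q) (hi q))
        = Finset.univ.filter (fun q : V × V =>
            G.Adj q.1 q.2 ∧ dnsty G p q.2 < t ∧ t ≤ dnsty G p q.1) := by
    intro t h1 h2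
    ext q
    simp only [hD, hlo, hhi, Finset.mem_filter, Finset.mem_univ, true_and, Set.mem_Ioc,
      max_lt_iff, le_min_iff]
    constructor
    · rintro ⟨⟨ha, _⟩, ⟨_, hb⟩, _, hc⟩
      exact ⟨ha, hb, hc⟩
    · rintro ⟨ha, hb, hc⟩
      exact ⟨⟨ha, lt_of_lt_of_le hb hc⟩, ⟨h1, hb⟩, h2, hc⟩
  -- pointwise inequality 1
  have key1 : ∀ t, (∑ q ∈ D, (Set.Ioc (lo q) (hi q)).indicator
        (fun _ => dnsty G p q.1 - dnsty G p q.2) t)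
      ≤ (Set.Ioc t0 τ).indicator (fun _ => 3 * α) t := by
    intro t
    by_cases ht : t ∈ Set.Ioc t0 τ
    · rw [Set.indicator_of_mem ht]
      obtain ⟨ht1, ht2⟩ := ht
      have e1 : (∑ q ∈ D, (Set.Ioc (lo q) (hi q)).indicator
            (fun _ => dnsty G p q.1 - dnsty G p q.2) t)
          = ∑ q ∈ D.filter (fun q => t ∈ Set.Ioc (lo q) (hi q)),
              (dnsty G p q.1 - dnsty G p q.2) := by
        calc (∑ q ∈ D, (Set.Ioc (lo q) (hi q)).indicator
              (fun _ => dnsty G p q.1 - dnsty G p q.2) t)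
            = ∑ q ∈ D, (if t ∈ Set.Ioc (lo q) (hi q)
                then dnsty G p q.1 - dnsty G p q.2 else 0) := by
              apply Finset.sum_congr rfl
              intro q _
              by_cases hmem : t ∈ Set.Ioc (lo q) (hi q)
              · rw [if_pos hmem, Set.indicator_of_mem hmem]
              · rw [if_neg hmem, Set.indicator_of_notMem hmem]
        _ = ∑ q ∈ D.filter (fun q => t ∈ Set.Ioc (lo q) (hi q)),
              (dnsty G p q.1 - dnsty G p q.2) := (Finset.sum_filter _ _).symm
      rw [e1, hDt t ht1 ht2]
      have e2 : cutSum G (Vge G p t) p = ∑ q ∈ (Vge G p t) ×ˢ (Vge G p t)ᶜ,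
          (if G.Adj q.1 q.2 then dnsty G p q.1 - dnsty G p q.2 else 0) := by
        rw [cutSum, Finset.sum_product]
      have hsub2 : Finset.univ.filter (fun q : V × V =>
            G.Adj q.1 q.2 ∧ dnsty G p q.2 < t ∧ t ≤ dnsty G p q.1)
          ⊆ (Vge G p t) ×ˢ (Vge G p t)ᶜ := by
        intro q hq
        simp only [Finset.mem_filter, Finset.mem_univ, true_and] at hq
        rw [Finset.mem_product, Finset.mem_compl, mem_Vge, mem_Vge]
        refine ⟨hq.2.2, ?_⟩
        push_neg
        exact hq.2.1
      have e3 : ∑ q ∈ Finset.univ.filter (fun q : V × V =>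
            G.Adj q.1 q.2 ∧ dnsty G p q.2 < t ∧ t ≤ dnsty G p q.1),
            (dnsty G p q.1 - dnsty G p q.2)
          ≤ cutSum G (Vge G p t) p := by
        rw [e2]
        have hcg : ∀ q ∈ Finset.univ.filter (fun q : V × V =>
            G.Adj q.1 q.2 ∧ dnsty G p q.2 < t ∧ t ≤ dnsty G p q.1),
            dnsty G p q.1 - dnsty G p q.2
              = (if G.Adj q.1 q.2 then dnsty G p q.1 - dnsty G p q.2 else 0) := by
          intro q hq
          simp only [Finset.mem_filter] at hq
          rw [if_pos hq.2.1]
        rw [Finset.sum_congr rfl hcg]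
        apply Finset.sum_le_sum_of_subset_of_nonneg hsub2
        intro q hq _
        rw [Finset.mem_product, Finset.mem_compl, mem_Vge, mem_Vge] at hq
        by_cases hadj : G.Adj q.1 q.2
        · rw [if_pos hadj]
          have h4 := hq.1
          have h5 : ¬ t ≤ dnsty G p q.2 := hq.2
          push_neg at h5
          linarith
        · rw [if_neg hadj]
      refine le_trans e3 ?_
      rw [hp]
      exact cutSum_le G α hα0 hα hd p0 hp0 hsum us _
    · rw [Set.indicator_of_notMem ht]
      have hz : ∀ q ∈ D, (Set.Ioc (lo q) (hi q)).indicator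
          (fun _ => dnsty G p q.1 - dnsty G p q.2) t = 0 := by
        intro q _
        apply Set.indicator_of_notMem
        intro hmem
        exact ht (Set.Ioc_subset_Ioc (le_max_left _ _) (min_le_left _ _) hmem)
      rw [Finset.sum_congr rfl hz]
      simp
  -- pointwise inequality 2
  have key2 : ∀ t, (Set.Ioc t0 τ).indicator (fun _ => φ) t
      ≤ ∑ q ∈ D, (Set.Ioc (lo q) (hi q)).indicator (fun _ => 1 / W q) t := by
    intro t
    have hterm0 : ∀ q ∈ D, 0 ≤ (Set.Ioc (lo q) (hi q)).indicator (fun _ => 1 / W q) t := by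
      intro q _
      apply Set.indicator_nonneg
      intro _ _
      exact div_nonneg zero_le_one (hWpos q).le
    by_cases ht : t ∈ Set.Ioc t0 τ
    · rw [Set.indicator_of_mem ht]
      obtain ⟨ht1, ht2⟩ := ht
      have e1 : (∑ q ∈ D, (Set.Ioc (lo q) (hi q)).indicator (fun _ => 1 / W q) t)
          = ∑ q ∈ D.filter (fun q => t ∈ Set.Ioc (lo q) (hi q)), 1 / W q := by
        calc (∑ q ∈ D, (Set.Ioc (lo q) (hi q)).indicator (fun _ => 1 / W q) t)
            = ∑ q ∈ D, (if t ∈ Set.Ioc (lo q) (hi q) then 1 / W q else 0) := by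
              apply Finset.sum_congr rfl
              intro q _
              by_cases hmem : t ∈ Set.Ioc (lo q) (hi q)
              · rw [if_pos hmem, Set.indicator_of_mem hmem]
              · rw [if_neg hmem, Set.indicator_of_notMem hmem]
        _ = ∑ q ∈ D.filter (fun q => t ∈ Set.Ioc (lo q) (hi q)), 1 / W q :=
              (Finset.sum_filter _ _).symm
      rw [e1, hDt t ht1 ht2]
      have hVt := hvolpos t ht2
      have hWle : ∀ q ∈ Finset.univ.filter (fun q : V × V =>
            G.Adj q.1 q.2 ∧ dnsty G p q.2 < t ∧ t ≤ dnsty G p q.1),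
          1 / ((vol G (Vge G p t) : ℕ):ℝ) ≤ 1 / W q := by
        intro q hq
        simp only [Finset.mem_filter, Finset.mem_univ, true_and] at hq
        apply one_div_le_one_div_of_le (hWpos q)
        rw [hWeq]
        have hthi : t ≤ hi q := le_min ht2 hq.2.2
        have h6 := vol_mono G (Vge_anti hthi (G := G) (p := p))
        exact_mod_cast h6
      have hAcard : (((bdry G (Vge G p t)).card : ℕ):ℝ)
          ≤ ((Finset.univ.filter (fun q : V × V =>
              G.Adj q.1 q.2 ∧ dnsty G p q.2 < t ∧ t ≤ dnsty G p q.1)).card : ℝ) := by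
        exact_mod_cast bdry_card_le G p t
      have hAφ := hA t ht1 ht2
      calc φ ≤ (((bdry G (Vge G p t)).card : ℕ):ℝ) / ((vol G (Vge G p t) : ℕ):ℝ) := by
            rw [le_div_iff₀ hVt]
            exact hAφ.le
      _ ≤ ((Finset.univ.filter (fun q : V × V =>
              G.Adj q.1 q.2 ∧ dnsty G p q.2 < t ∧ t ≤ dnsty G p q.1)).card : ℝ)
              / ((vol G (Vge G p t) : ℕ):ℝ) := by gcongr
      _ = ∑ _q ∈ Finset.univ.filter (fun q : V × V =>
              G.Adj q.1 q.2 ∧ dnsty G p q.2 < t ∧ t ≤ dnsty G p q.1),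
            (1 / ((vol G (Vge G p t) : ℕ):ℝ)) := by
            rw [Finset.sum_const, nsmul_eq_mul]
            ring
      _ ≤ ∑ q ∈ Finset.univ.filter (fun q : V × V =>
              G.Adj q.1 q.2 ∧ dnsty G p q.2 < t ∧ t ≤ dnsty G p q.1), 1 / W q :=
            Finset.sum_le_sum hWle
    · rw [Set.indicator_of_notMem ht]
      exact Finset.sum_nonneg hterm0
  -- integrate
  have int1 : ∑ q ∈ D, lng q * (dnsty G p q.1 - dnsty G p q.2) ≤ lenI t0 τ * (3 * α) := by
    have hi1 : MeasureTheory.Integrable (fun t => ∑ q ∈ D,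
        (Set.Ioc (lo q) (hi q)).indicator (fun _ => dnsty G p q.1 - dnsty G p q.2) t) :=
      MeasureTheory.integrable_finset_sum D (fun q _ => integrable_ind _ _ _)
    have hi2 : MeasureTheory.Integrable ((Set.Ioc t0 τ).indicator (fun _ => (3:ℝ) * α)) :=
      integrable_ind _ _ _
    have h7 := MeasureTheory.integral_mono hi1 hi2 key1
    rw [MeasureTheory.integral_finset_sum D (fun q _ => integrable_ind _ _ _)] at h7
    simp only [integral_ind] at h7
    exact h7
  have int2 : lenI t0 τ * φ ≤ ∑ q ∈ D, lng q * (1 / W q) := by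
    have hi1 : MeasureTheory.Integrable ((Set.Ioc t0 τ).indicator (fun _ => φ)) :=
      integrable_ind _ _ _
    have hi2 : MeasureTheory.Integrable (fun t => ∑ q ∈ D,
        (Set.Ioc (lo q) (hi q)).indicator (fun _ => 1 / W q) t) :=
      MeasureTheory.integrable_finset_sum D (fun q _ => integrable_ind _ _ _)
    have h7 := MeasureTheory.integral_mono hi1 hi2 key2
    rw [MeasureTheory.integral_finset_sum D (fun q _ => integrable_ind _ _ _)] at h7
    simp only [integral_ind] at h7
    exact h7
  have hlen : lenI t0 τ = τ - t0 := by
    rw [lenI_eq]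
    exact max_eq_left (by linarith)
  rw [hlen] at int1 int2
  -- restrict to pairs with positive length
  set E : Finset (V × V) := D.filter (fun q => 0 < lng q) with hE
  have hEsub : E ⊆ D := Finset.filter_subset _ _
  have hgap : ∀ q ∈ D, 0 ≤ dnsty G p q.1 - dnsty G p q.2 := by
    intro q hq
    simp only [hD, Finset.mem_filter, Finset.mem_univ, true_and] at hq
    linarith [hq.2]
  have hlng_le_gap : ∀ q ∈ D, lng q ≤ dnsty G p q.1 - dnsty G p q.2 := by
    intro q hq
    calc lng q ≤ lenI (dnsty G p q.2) (dnsty G p q.1) :=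
          lenI_le _ _ _ _ (le_max_right _ _) (min_le_right _ _)
    _ = dnsty G p q.1 - dnsty G p q.2 := by
        rw [lenI_eq]
        exact max_eq_left (hgap q hq)
  have hEsum : ∑ q ∈ D, lng q * (1 / W q) = ∑ q ∈ E, lng q * (1 / W q) := by
    rw [hE]
    symm
    apply Finset.sum_filter_of_ne
    intro q _ hne0
    rcases lt_or_eq_of_le (hlng0 q) with h | h
    · exact h
    · exfalso; apply hne0; rw [← h, zero_mul]
  have hsq_le : ∑ q ∈ E, (lng q)^2 ≤ (τ - t0) * (3 * α) := by
    refine le_trans ?_ int1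
    calc ∑ q ∈ E, (lng q)^2 ≤ ∑ q ∈ E, lng q * (dnsty G p q.1 - dnsty G p q.2) := by
          apply Finset.sum_le_sum
          intro q hq
          rw [sq]
          exact mul_le_mul_of_nonneg_left (hlng_le_gap q (hEsub hq)) (hlng0 q)
    _ ≤ ∑ q ∈ D, lng q * (dnsty G p q.1 - dnsty G p q.2) := by
          apply Finset.sum_le_sum_of_subset_of_nonneg hEsub
          intro q hq _
          exact mul_nonneg (hlng0 q) (hgap q hq)
  -- the counting bound
  have hcount : ∑ q ∈ E, (1 / W q)^2 ≤ 2 / ((vol G (Vge G p τ) : ℕ):ℝ) := by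
    have hterm : ∀ q ∈ E, (1 / W q)^2
        ≤ 1 / (max ((vol G (Vge G p τ) : ℕ):ℝ)
            (((E.filter (fun q' => hi q ≤ hi q')).card : ℕ):ℝ))^2 := by
      intro q hq
      have h8 : ((E.filter (fun q' => hi q ≤ hi q')).card : ℝ) ≤ W q := by
        have h9 : (E.filter (fun q' => hi q ≤ hi q')).card
            ≤ (E.filter (fun q' => hi q ≤ dnsty G p q'.1)).card := by
          apply Finset.card_le_card
          apply Finset.monotone_filter_right
          intro q' _ hq'
          exact le_trans hq' (min_le_right _ _)
        have h10 := count_le G p E (fun q' hq' => by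
          have := hEsub hq'
          simp only [hD, Finset.mem_filter, Finset.mem_univ, true_and] at this
          exact this.1) (hi q)
        have h11 : ((E.filter (fun q' => hi q ≤ dnsty G p q'.1)).card : ℕ)
            ≤ vol G (Vge G p (hi q)) := h10
        rw [hWeq]
        exact_mod_cast le_trans h9 h11
      have hmaxle : max ((vol G (Vge G p τ) : ℕ):ℝ)
          (((E.filter (fun q' => hi q ≤ hi q')).card : ℕ):ℝ) ≤ W q :=
        max_le (hW_ge q) h8
      have hmaxpos : 0 < max ((vol G (Vge G p τ) : ℕ):ℝ)
          (((E.filter (fun q' => hi q ≤ hi q')).card : ℕ):ℝ) :=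
        lt_of_lt_of_le hKτpos (le_max_left _ _)
      have h12 : 1 / W q ≤ 1 / max ((vol G (Vge G p τ) : ℕ):ℝ)
          (((E.filter (fun q' => hi q ≤ hi q')).card : ℕ):ℝ) :=
        one_div_le_one_div_of_le hmaxpos hmaxle
      have h13 : 0 ≤ 1 / W q := div_nonneg zero_le_one (hWpos q).le
      calc (1 / W q)^2 ≤ (1 / max ((vol G (Vge G p τ) : ℕ):ℝ)
          (((E.filter (fun q' => hi q ≤ hi q')).card : ℕ):ℝ))^2 := by
            apply pow_le_pow_left₀ h13 h12
      _ = 1 / (max ((vol G (Vge G p τ) : ℕ):ℝ)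
          (((E.filter (fun q' => hi q ≤ hi q')).card : ℕ):ℝ))^2 := by
            rw [div_pow, one_pow]
    have hrank := rank_sum (fun k => 1 / (max ((vol G (Vge G p τ) : ℕ):ℝ) (k:ℝ))^2)
      (by
        intro i j hij
        have hij' : (i:ℝ) ≤ (j:ℝ) := by exact_mod_cast hij
        have hmi : (0:ℝ) < max ((vol G (Vge G p τ) : ℕ):ℝ) (i:ℝ) :=
          lt_of_lt_of_le hKτpos (le_max_left _ _)
        have hmj : max ((vol G (Vge G p τ) : ℕ):ℝ) (i:ℝ)
            ≤ max ((vol G (Vge G p τ) : ℕ):ℝ) (j:ℝ) := by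
          apply max_le_max le_rfl hij'
        exact one_div_le_one_div_of_le (pow_pos hmi 2) (by nlinarith)
        )
      (fun i => by positivity) E (fun q => hi q)
    have hFsum := Fsum_le (vol G (Vge G p τ)) hKτ1 E.card
    calc ∑ q ∈ E, (1 / W q)^2
        ≤ ∑ q ∈ E, 1 / (max ((vol G (Vge G p τ) : ℕ):ℝ)
            (((E.filter (fun q' => hi q ≤ hi q')).card : ℕ):ℝ))^2 :=
          Finset.sum_le_sum hterm
    _ ≤ ∑ i ∈ Finset.Icc 1 E.card, 1 / (max ((vol G (Vge G p τ) : ℕ):ℝ) (i:ℝ))^2 := hrank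
    _ ≤ 2 / ((vol G (Vge G p τ) : ℕ):ℝ) := hFsum
  -- Cauchy-Schwarz and conclusion
  have hCS := Finset.sum_mul_sq_le_sq_mul_sq E (fun q => lng q) (fun q => 1 / W q)
  have hlhs : ((τ - t0) * φ)^2 ≤ (∑ q ∈ E, lng q * (1 / W q))^2 := by
    apply pow_le_pow_left₀ (mul_nonneg hΔ.le hφ0)
    rw [← hEsum]
    exact int2
  have hrhs : (∑ q ∈ E, (lng q)^2) * (∑ q ∈ E, (1 / W q)^2)
      ≤ ((τ - t0) * (3 * α)) * (2 / ((vol G (Vge G p τ) : ℕ):ℝ)) := by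
    apply mul_le_mul hsq_le hcount
    · apply Finset.sum_nonneg
      intro q _
      positivity
    · positivity
  have hfinal : ((τ - t0) * φ)^2 ≤ ((τ - t0) * (3 * α)) * (2 / ((vol G (Vge G p τ) : ℕ):ℝ)) :=
    le_trans hlhs (le_trans hCS hrhs)
  rw [mul_pow, hφsq] at hfinal
  have hsimp : (τ - t0)^2 * (42 * α / ((τ - t0) * ((vol G (Vge G p τ) : ℕ):ℝ)))
      = 42 * α * (τ - t0) / ((vol G (Vge G p τ) : ℕ):ℝ) := by
    field_simp
  rw [hsimp] at hfinal
  have hrh2 : ((τ - t0) * (3 * α)) * (2 / ((vol G (Vge G p τ) : ℕ):ℝ))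
      = 6 * α * (τ - t0) / ((vol G (Vge G p τ) : ℕ):ℝ) := by
    field_simp
    ring
  rw [hrh2] at hfinal
  rw [div_le_div_iff_of_pos_right] at hfinal
  · nlinarith [mul_pos hα0 hΔ]
  · exact hKτpos

end
end

section
/- Let V be a finite set and w : V × V → ℕ a symmetric function with w(v,v) = 0 for all v (a multigraph given by edge multiplicities), and set d(v) = ∑_{u∈V} w(v,u). Let C ⊆ V, and for v ∈ C let leave(v) = ∑_{u∉C} w(v,u) and k = ∑_{v∈C} leave(v) (the number of edges leaving C, with multiplicity). Let L = {v ∈ C : 2·leave(v) ≥ d(v) − 2}, and suppose every v ∈ L has d(v) ≥ 100. Then k plus the number of edges with both endpoints in C and at least one endpoint in L (with multiplicity, each such edge counted once) is at most (100/49)·k. -/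
open scoped Classical
open Finset

noncomputable section

theorem stmt19 {V : Type*} [Fintype V] (w : V × V → ℕ)
    (hsymm : ∀ u v : V, w (u, v) = w (v, u))
    (hdiag : ∀ v : V, w (v, v) = 0)
    (C : Finset V)
    (d : V → ℕ) (hd : ∀ v : V, d v = ∑ u : V, w (v, u))
    (leave : V → ℕ) (hleave : ∀ v : V, leave v = ∑ u ∈ Cᶜ, w (v, u))
    (k : ℕ) (hk : k = ∑ v ∈ C, leave v)
    (L : Finset V) (hL : L = C.filter fun v => d v ≤ 2 * leave v + 2)
    (hdL : ∀ v ∈ L, 100 ≤ d v) :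
    (k : ℝ) +
        (∑ a ∈ C, ∑ b ∈ C, if a ∈ L ∨ b ∈ L then (w (a, b) : ℝ) else 0) / 2 ≤
      100 / 49 * (k : ℝ) := by
  have hLsub : L ⊆ C := by rw [hL]; exact Finset.filter_subset _ _
  have hsplit : ∀ a : V, (∑ b ∈ C, (w (a, b) : ℝ)) + (leave a : ℝ) = d a := by
    intro a
    have h := Finset.sum_add_sum_compl C (fun u => (w (a, u) : ℝ))
    rw [hd, hleave]
    push_cast
    linarith
  have hkey : ∀ a ∈ L, (∑ b ∈ C, (w (a, b) : ℝ)) ≤ 51 / 49 * (leave a : ℝ) := by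
    intro a ha
    have h1 : d a ≤ 2 * leave a + 2 := by
      rw [hL] at ha; exact (Finset.mem_filter.mp ha).2
    have h2 : 100 ≤ d a := hdL a ha
    have h3 := hsplit a
    have h1' : (d a : ℝ) ≤ 2 * (leave a : ℝ) + 2 := by exact_mod_cast h1
    have h2' : (100 : ℝ) ≤ (d a : ℝ) := by exact_mod_cast h2
    linarith
  set T : ℝ := ∑ a ∈ L, ∑ b ∈ C, (w (a, b) : ℝ) with hT
  have hA : (∑ a ∈ C, ∑ b ∈ C, if a ∈ L then (w (a, b) : ℝ) else 0) = T := by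
    have hinner : ∀ a : V, (∑ b ∈ C, if a ∈ L then (w (a, b) : ℝ) else 0)
        = if a ∈ L then ∑ b ∈ C, (w (a, b) : ℝ) else 0 := by
      intro a; split_ifs <;> simp
    rw [Finset.sum_congr rfl fun a _ => hinner a, ← Finset.sum_filter,
      Finset.filter_mem_eq_inter, Finset.inter_eq_right.mpr hLsub]
  have hB : (∑ a ∈ C, ∑ b ∈ C, if b ∈ L then (w (a, b) : ℝ) else 0) = T := by
    rw [Finset.sum_comm]
    have hinner : ∀ b : V, (∑ a ∈ C, if b ∈ L then (w (a, b) : ℝ) else 0)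
        = if b ∈ L then ∑ a ∈ C, (w (a, b) : ℝ) else 0 := by
      intro b; split_ifs <;> simp
    rw [Finset.sum_congr rfl fun b _ => hinner b, ← Finset.sum_filter,
      Finset.filter_mem_eq_inter, Finset.inter_eq_right.mpr hLsub]
    exact Finset.sum_congr rfl fun b _ => Finset.sum_congr rfl fun a _ => by
      rw [hsymm]
  have hSle : (∑ a ∈ C, ∑ b ∈ C, if a ∈ L ∨ b ∈ L then (w (a, b) : ℝ) else 0)
      ≤ 2 * T := by
    have step : (∑ a ∈ C, ∑ b ∈ C, if a ∈ L ∨ b ∈ L then (w (a, b) : ℝ) else 0)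
        ≤ ∑ a ∈ C, ∑ b ∈ C, ((if a ∈ L then (w (a, b) : ℝ) else 0)
            + (if b ∈ L then (w (a, b) : ℝ) else 0)) := by
      refine Finset.sum_le_sum fun a _ => Finset.sum_le_sum fun b _ => ?_
      by_cases ha : a ∈ L <;> by_cases hb : b ∈ L <;> simp [ha, hb] <;> positivity
    calc (∑ a ∈ C, ∑ b ∈ C, if a ∈ L ∨ b ∈ L then (w (a, b) : ℝ) else 0)
        ≤ ∑ a ∈ C, ∑ b ∈ C, ((if a ∈ L then (w (a, b) : ℝ) else 0)
            + (if b ∈ L then (w (a, b) : ℝ) else 0)) := step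
      _ = (∑ a ∈ C, ∑ b ∈ C, if a ∈ L then (w (a, b) : ℝ) else 0)
            + ∑ a ∈ C, ∑ b ∈ C, if b ∈ L then (w (a, b) : ℝ) else 0 := by
          rw [← Finset.sum_add_distrib]
          exact Finset.sum_congr rfl fun a _ => Finset.sum_add_distrib
      _ = 2 * T := by rw [hA, hB]; ring
  have hTk : T ≤ 51 / 49 * (k : ℝ) := by
    have h1 : T ≤ ∑ a ∈ L, 51 / 49 * (leave a : ℝ) :=
      Finset.sum_le_sum hkey
    have h2 : (∑ a ∈ L, (leave a : ℝ)) ≤ ∑ a ∈ C, (leave a : ℝ) :=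
      Finset.sum_le_sum_of_subset_of_nonneg hLsub (fun a _ _ => by positivity)
    have h3 : (k : ℝ) = ∑ a ∈ C, (leave a : ℝ) := by rw [hk]; push_cast; ring
    rw [← Finset.mul_sum] at h1
    rw [h3]
    nlinarith [h1, h2]
  linarith
end
end
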